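/- In a Kőnig–Egerváry graph G (one in which the number of vertices equals α + μ, where α is the independence number and μ is the maximum matching size), the independent set sequence satisfies i_{⌈(2α-1)/3⌉} ≥ i_{⌈(2α-1)/3⌉+1} ≥ ... ≥ i_α. -/
import Mathlib


open Finset

def IsIndepFinset {V : Type*} (G : SimpleGraph V) (s : Finset V) : Prop :=
  ∀ a ∈ s, ∀ b ∈ s, ¬ G.Adj a b

open Classical in
noncomputable def indepCount {V : Type*} [Fintype V] (G : SimpleGraph V) (k : ℕ) : ℕ :=
  (Finset.univ.filter fun s : Finset V => s.card = k ∧ IsIndepFinset G s).card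

lemma indep_subset {V : Type*} {G : SimpleGraph V} {s t : Finset V}
    (h : IsIndepFinset G t) (hst : s ⊆ t) : IsIndepFinset G s :=
  fun a ha b hb => h a (hst ha) b (hst hb)

/-- Core counting lemma: if `S` is an independent set of size `α`, `f` matches each vertex
outside `S` to a neighbor in `S` injectively, and `E` is a set of vertices each of which
extends the independent set `A`, then `|E| ≤ 2(α - |A|)`. -/
lemma extBound {V : Type*} [DecidableEq V] (G : SimpleGraph V)
    (S A E : Finset V) (f : V → V) (α : ℕ)
    (hSc : S.card = α) (hA : IsIndepFinset G A)
    (hf1 : ∀ v ∉ S, G.Adj v (f v)) (hf2 : ∀ v ∉ S, f v ∈ S)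
    (hfi : ∀ u ∉ S, ∀ v ∉ S, f u = f v → u = v)
    (hE : ∀ v ∈ E, v ∉ A ∧ IsIndepFinset G (insert v A)) :
    E.card ≤ 2 * (α - A.card) := by
  have hfAS : ∀ v ∈ A \ S, f v ∈ S \ A := by
    intro v hv
    obtain ⟨hvA, hvS⟩ := mem_sdiff.mp hv
    refine mem_sdiff.mpr ⟨hf2 v hvS, fun hfA => ?_⟩
    exact hA v hvA (f v) hfA (hf1 v hvS)
  have hfES : ∀ v ∈ E \ S, f v ∈ S \ A := by
    intro v hv
    obtain ⟨hvE, hvS⟩ := mem_sdiff.mp hv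
    refine mem_sdiff.mpr ⟨hf2 v hvS, fun hfA => ?_⟩
    exact (hE v hvE).2 v (mem_insert_self _ _) (f v) (mem_insert_of_mem hfA) (hf1 v hvS)
  -- Bound 1 : |E ∩ S| + |A \ S| ≤ |S \ A|
  have hb1 : (E ∩ S).card + (A \ S).card ≤ (S \ A).card := by
    have hdisj : Disjoint (E ∩ S) ((A \ S).image f) := by
      rw [Finset.disjoint_left]
      rintro w hw hw2
      obtain ⟨u, hu, rfl⟩ := mem_image.mp hw2
      obtain ⟨huA, huS⟩ := mem_sdiff.mp hu
      obtain ⟨hwE, _⟩ := mem_inter.mp hw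
      exact (hE (f u) hwE).2 u (mem_insert_of_mem huA) (f u) (mem_insert_self _ _)
        (hf1 u huS)
    have hsub : (E ∩ S) ∪ (A \ S).image f ⊆ S \ A := by
      apply union_subset
      · intro v hv
        obtain ⟨hvE, hvS⟩ := mem_inter.mp hv
        exact mem_sdiff.mpr ⟨hvS, (hE v hvE).1⟩
      · intro w hw
        obtain ⟨u, hu, rfl⟩ := mem_image.mp hw
        exact hfAS u hu
    have himg : ((A \ S).image f).card = (A \ S).card :=
      card_image_of_injOn (fun u hu v hv h =>
        hfi u (mem_sdiff.mp hu).2 v (mem_sdiff.mp hv).2 h)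
    calc (E ∩ S).card + (A \ S).card
        = ((E ∩ S) ∪ (A \ S).image f).card := by
          rw [card_union_of_disjoint hdisj, himg]
      _ ≤ (S \ A).card := card_le_card hsub
  -- Bound 2 : |E \ S| + |A \ S| ≤ |S \ A|
  have hb2 : (E \ S).card + (A \ S).card ≤ (S \ A).card := by
    have hdisj : Disjoint (E \ S) (A \ S) := by
      rw [Finset.disjoint_left]
      intro v hv hv2
      exact (hE v (mem_sdiff.mp hv).1).1 (mem_sdiff.mp hv2).1
    have hsub : ((E \ S) ∪ (A \ S)).image f ⊆ S \ A := by
      intro w hw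
      obtain ⟨u, hu, rfl⟩ := mem_image.mp hw
      rcases mem_union.mp hu with h | h
      · exact hfES u h
      · exact hfAS u h
    have hnotS : ∀ u ∈ (E \ S) ∪ (A \ S), u ∉ S := by
      intro u hu
      rcases mem_union.mp hu with h | h
      · exact (mem_sdiff.mp h).2
      · exact (mem_sdiff.mp h).2
    have himg : (((E \ S) ∪ (A \ S)).image f).card = ((E \ S) ∪ (A \ S)).card :=
      card_image_of_injOn (fun u hu v hv h => hfi u (hnotS u hu) v (hnotS v hv) h)
    calc (E \ S).card + (A \ S).card
        = ((E \ S) ∪ (A \ S)).card := (card_union_of_disjoint hdisj).symm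
      _ = (((E \ S) ∪ (A \ S)).image f).card := himg.symm
      _ ≤ (S \ A).card := card_le_card hsub
  have h1 : (E ∩ S).card + (E \ S).card = E.card := card_inter_add_card_sdiff E S
  have h2 : (A ∩ S).card + (A \ S).card = A.card := card_inter_add_card_sdiff A S
  have h3 : (S ∩ A).card + (S \ A).card = S.card := card_inter_add_card_sdiff S A
  have h4 : (S ∩ A).card = (A ∩ S).card := by rw [inter_comm]
  omega

/-- The monotonicity step. -/
lemma stepIneq {V : Type*} [Fintype V] (G : SimpleGraph V)
    (S : Finset V) (f : V → V) (α : ℕ)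
    (hSc : S.card = α)
    (hf1 : ∀ v ∉ S, G.Adj v (f v)) (hf2 : ∀ v ∉ S, f v ∈ S)
    (hfi : ∀ u ∉ S, ∀ v ∉ S, f u = f v → u = v)
    (m : ℕ) (hm : 2 * α ≤ 3 * m + 1) :
    indepCount G (m + 1) ≤ indepCount G m := by
  classical
  unfold indepCount
  refine Nat.le_of_mul_le_mul_right ?_ (Nat.succ_pos m)
  apply Finset.card_mul_le_card_mul' (r := fun A B : Finset V => A ⊆ B)
  · -- below count equals m + 1
    intro B hB
    rw [mem_filter] at hB
    obtain ⟨-, hBcard, hBindep⟩ := hB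
    have heq : (Finset.bipartiteBelow (fun A B : Finset V => A ⊆ B)
        (univ.filter fun s : Finset V => s.card = m ∧ IsIndepFinset G s) B)
        = B.powersetCard m := by
      ext A
      simp only [Finset.mem_bipartiteBelow, mem_filter, mem_univ, true_and,
        mem_powersetCard]
      constructor
      · rintro ⟨⟨hc, _⟩, hsub⟩
        exact ⟨hsub, hc⟩
      · rintro ⟨hsub, hc⟩
        exact ⟨⟨hc, indep_subset hBindep hsub⟩, hsub⟩
    rw [heq, card_powersetCard, hBcard, Nat.choose_succ_self_right]
  · -- above count is at most m + 1
    intro A hA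
    rw [mem_filter] at hA
    obtain ⟨-, hAcard, hAindep⟩ := hA
    set Ext := univ.filter fun v : V => v ∉ A ∧ IsIndepFinset G (insert v A) with hExt
    have hub : Ext.card ≤ 2 * (α - m) := by
      have := extBound G S A Ext f α hSc hAindep hf1 hf2 hfi
        (fun v hv => (mem_filter.mp hv).2)
      rwa [hAcard] at this
    have hle : (Finset.bipartiteAbove (fun A B : Finset V => A ⊆ B)
        (univ.filter fun s : Finset V => s.card = m + 1 ∧ IsIndepFinset G s) A).card
        ≤ Ext.card := by
      have hmap : ∀ B ∈ (Finset.bipartiteAbove (fun A B : Finset V => A ⊆ B)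
          (univ.filter fun s : Finset V => s.card = m + 1 ∧ IsIndepFinset G s) A),
          B \ A ∈ Ext.image (fun v => ({v} : Finset V)) := by
        intro B hB
        rw [Finset.mem_bipartiteAbove, mem_filter] at hB
        obtain ⟨⟨-, hBcard, hBindep⟩, hsub⟩ := hB
        have hcard1 : (B \ A).card = 1 := by
          rw [card_sdiff_of_subset hsub, hBcard, hAcard]; omega
        obtain ⟨v, hv⟩ := Finset.card_eq_one.mp hcard1
        have hvmem : v ∈ B \ A := hv ▸ mem_singleton_self v
        obtain ⟨hvB, hvA⟩ := mem_sdiff.mp hvmem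
        have hins : insert v A ⊆ B := insert_subset hvB hsub
        refine mem_image.mpr ⟨v, ?_, hv.symm⟩
        exact mem_filter.mpr ⟨mem_univ v, hvA, indep_subset hBindep hins⟩
      calc (Finset.bipartiteAbove (fun A B : Finset V => A ⊆ B)
          (univ.filter fun s : Finset V => s.card = m + 1 ∧ IsIndepFinset G s) A).card
          ≤ (Ext.image (fun v => ({v} : Finset V))).card := by
            apply Finset.card_le_card_of_injOn (fun B => B \ A) hmap
            intro B1 h1 B2 h2 heq
            rw [Finset.mem_coe, Finset.mem_bipartiteAbove] at h1 h2
            have e1 : A ∪ B1 \ A = B1 := union_sdiff_of_subset h1.2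
            have e2 : A ∪ B2 \ A = B2 := union_sdiff_of_subset h2.2
            rw [← e1, ← e2]
            exact congrArg (A ∪ ·) heq
        _ ≤ Ext.card := card_image_le
    calc (Finset.bipartiteAbove (fun A B : Finset V => A ⊆ B)
        (univ.filter fun s : Finset V => s.card = m + 1 ∧ IsIndepFinset G s) A).card
        ≤ Ext.card := hle
      _ ≤ 2 * (α - m) := hub
      _ ≤ m + 1 := by omega

theorem stmt_9 {V : Type*} [Fintype V] (G : SimpleGraph V) (n α μ : ℕ)
    (hn : n = Fintype.card V)
    (hα : IsGreatest {m | ∃ s : Finset V, IsIndepFinset G s ∧ s.card = m} α)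
    (hμ : IsGreatest {m | ∃ M : G.Subgraph, M.IsMatching ∧ M.edgeSet.ncard = m} μ)
    (hKE : n = α + μ) :
    ∀ k l : ℕ, ⌈((2 * α - 1 : ℕ) : ℚ) / 3⌉₊ ≤ k → k ≤ l → l ≤ α →
      indepCount G l ≤ indepCount G k := by
  classical
  intro k l hk hkl hlα
  -- threshold arithmetic
  have hkα : 2 * α - 1 ≤ 3 * k := by
    have h1 := Nat.ceil_le.mp hk
    rw [div_le_iff₀ (by norm_num : (0:ℚ) < 3)] at h1
    have h2 : ((2 * α - 1 : ℕ) : ℚ) ≤ ((3 * k : ℕ) : ℚ) := by push_cast; linarith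
    exact_mod_cast h2
  -- maximum independent set
  obtain ⟨S, hSind, hScard⟩ := hα.1
  -- maximum matching
  obtain ⟨M, hM, hMcard⟩ := hμ.1
  have hfin : M.edgeSet.Finite := Set.toFinite _
  set E' : Finset (Sym2 V) := hfin.toFinset with hE'def
  have hE'card : E'.card = μ := by
    rw [← hMcard, Set.ncard_eq_toFinset_card _ hfin]
  have hE'adj : ∀ u v : V, s(u, v) ∈ E' → M.Adj u v := by
    intro u v h
    rw [hE'def, Set.Finite.mem_toFinset, SimpleGraph.Subgraph.mem_edgeSet] at h
    exact h
  -- choose an endpoint outside S in each matching edge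
  have hchoice : ∀ e ∈ E', ∃ v, v ∈ e ∧ v ∉ S := by
    intro e he
    induction e using Sym2.ind with
    | _ u v =>
      have hadj : G.Adj u v := M.adj_sub (hE'adj u v he)
      by_cases hu : u ∈ S
      · by_cases hv : v ∈ S
        · exact absurd hadj (hSind u hu v hv)
        · exact ⟨v, Sym2.mem_mk_right u v, hv⟩
      · exact ⟨u, Sym2.mem_mk_left u v, hu⟩
  set g : Sym2 V → V := fun e =>
    if h : ∃ v, v ∈ e ∧ v ∉ S then h.choose else (Quot.out e).1 with hgdef
  have hg : ∀ e ∈ E', g e ∈ e ∧ g e ∉ S := by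
    intro e he
    have h : ∃ v, v ∈ e ∧ v ∉ S := hchoice e he
    simp only [hgdef, dif_pos h]
    exact h.choose_spec
  have hginj : ∀ e₁ ∈ E', ∀ e₂ ∈ E', g e₁ = g e₂ → e₁ = e₂ := by
    intro e₁ h₁ e₂ h₂ heq
    obtain ⟨v, hv⟩ : ∃ v, g e₂ = v := ⟨_, rfl⟩
    have hm1 : v ∈ e₁ := by rw [← hv, ← heq]; exact (hg e₁ h₁).1
    have hm2 : v ∈ e₂ := by rw [← hv]; exact (hg e₂ h₂).1
    obtain ⟨w₁, rfl⟩ := Sym2.mem_iff_exists.mp hm1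
    obtain ⟨w₂, rfl⟩ := Sym2.mem_iff_exists.mp hm2
    have ha₁ : M.Adj v w₁ := hE'adj _ _ h₁
    have ha₂ : M.Adj v w₂ := hE'adj _ _ h₂
    obtain ⟨w, _, huniq⟩ := hM (M.edge_vert ha₁)
    rw [huniq w₁ ha₁, huniq w₂ ha₂]
  have hcardV : Fintype.card V = α + μ := by omega
  have hScompl : (Sᶜ : Finset V).card = μ := by
    rw [card_compl, hScard, hcardV]; omega
  have himage : E'.image g = Sᶜ := by
    apply Finset.eq_of_subset_of_card_le
    · intro v hv
      obtain ⟨e, he, rfl⟩ := mem_image.mp hv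
      exact Finset.mem_compl.mpr (hg e he).2
    · rw [Finset.card_image_of_injOn (fun e he e' he' => hginj e he e' he'),
        hE'card, hScompl]
  have hcover : ∀ v, v ∉ S → ∃ w, M.Adj v w := by
    intro v hv
    have hv' : v ∈ E'.image g := himage ▸ Finset.mem_compl.mpr hv
    obtain ⟨e, he, hge⟩ := mem_image.mp hv'
    have hmem : v ∈ e := hge ▸ (hg e he).1
    obtain ⟨w, rfl⟩ := Sym2.mem_iff_exists.mp hmem
    exact ⟨w, hE'adj v w he⟩
  set f : V → V := fun v => if h : ∃ w, M.Adj v w then h.choose else v with hfdef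
  have hfadjM : ∀ v, v ∉ S → M.Adj v (f v) := by
    intro v hv
    have h := hcover v hv
    simp only [hfdef, dif_pos h]
    exact h.choose_spec
  have hf1 : ∀ v ∉ S, G.Adj v (f v) := fun v hv => M.adj_sub (hfadjM v hv)
  have huniqf : ∀ v, v ∉ S → ∀ w, M.Adj v w → w = f v := by
    intro v hv w hw
    obtain ⟨w', _, hu⟩ := hM (M.edge_vert hw)
    rw [hu w hw, hu (f v) (hfadjM v hv)]
  have hf2 : ∀ v ∉ S, f v ∈ S := by
    intro v hv
    by_contra hfS
    have h1 : v ∈ E'.image g := himage ▸ Finset.mem_compl.mpr hv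
    have h2 : f v ∈ E'.image g := himage ▸ Finset.mem_compl.mpr hfS
    obtain ⟨e₁, he₁, hge₁⟩ := mem_image.mp h1
    obtain ⟨e₂, he₂, hge₂⟩ := mem_image.mp h2
    have hv1 : v ∈ e₁ := hge₁ ▸ (hg e₁ he₁).1
    have hv2 : f v ∈ e₂ := hge₂ ▸ (hg e₂ he₂).1
    obtain ⟨w₁, rfl⟩ := Sym2.mem_iff_exists.mp hv1
    obtain ⟨w₂, rfl⟩ := Sym2.mem_iff_exists.mp hv2
    have hadj₁ : M.Adj v w₁ := hE'adj v w₁ he₁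
    have hadj₂ : M.Adj (f v) w₂ := hE'adj (f v) w₂ he₂
    have hw₁ : w₁ = f v := huniqf v hv w₁ hadj₁
    have hw₂ : w₂ = v := by
      obtain ⟨w', _, hu⟩ := hM (M.edge_vert hadj₂)
      rw [hu w₂ hadj₂, hu v (hfadjM v hv).symm]
    have heq : s(v, w₁) = s(f v, w₂) := by
      rw [hw₁, hw₂, Sym2.eq_swap]
    have hvfv : v = f v := by
      calc v = g s(v, w₁) := hge₁.symm
        _ = g s(f v, w₂) := by rw [heq]
        _ = f v := hge₂
    have hadj := hf1 v hv
    rw [← hvfv] at hadj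
    exact G.irrefl hadj
  have hfi : ∀ u ∉ S, ∀ v ∉ S, f u = f v → u = v := by
    intro u hu v hv heq
    have h1 : M.Adj (f u) u := (hfadjM u hu).symm
    have h2 : M.Adj (f u) v := by rw [heq]; exact (hfadjM v hv).symm
    obtain ⟨w, _, hu'⟩ := hM (M.edge_vert h1)
    rw [hu' u h1, hu' v h2]
  -- conclude by induction
  have step : ∀ m : ℕ, k ≤ m → indepCount G (m + 1) ≤ indepCount G m := by
    intro m hm
    exact stepIneq G S f α hScard hf1 hf2 hfi m (by omega)
  clear hlα
  induction l with
  | zero =>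
    have hk0 : k = 0 := Nat.le_zero.mp hkl
    rw [hk0]
  | succ n ih =>
    rcases Nat.lt_or_ge k (n + 1) with h | h
    · have hkn : k ≤ n := by omega
      exact le_trans (step n hkn) (ih hkn)
    · rw [le_antisymm hkl h]
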